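/- arXiv:2307.08447 — 2 statements merged into one kernel-verified Lean document; each statement's English description precedes it below -/
import Mathlib

section
/- Let G be a perfect graph and let W, W' be distinct stable sets of G. Then conv({ρ(W), ρ(W')}) is an edge of the stable set polytope Stab(G) if and only if the induced subgraph of G on the symmetric difference W △ W' is a connected bipartite graph. -/
open Set

variable {V : Type*} [Fintype V]

/-- A stable (independent) set of a graph. -/
def IsStable (G : SimpleGraph V) (W : Set V) : Prop := ∀ a ∈ W, ∀ b ∈ W, ¬ G.Adj a b

/-- The indicator vector of a subset. -/
noncomputable def rho (W : Set V) : V → ℝ := W.indicator 1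

/-- The stable set polytope of a graph. -/
noncomputable def stabPolytope (G : SimpleGraph V) : Set (V → ℝ) :=
  convexHull ℝ {x | ∃ W : Set V, IsStable G W ∧ x = rho W}

/-- `conv {v, w}` is an edge (1-dimensional face) of the polytope `P`. -/
def IsEdgeOf (P : Set (V → ℝ)) (v w : V → ℝ) : Prop :=
  v ≠ w ∧ IsExtreme ℝ P (segment ℝ v w)

/-- A graph is perfect if every induced subgraph has chromatic number equal to clique number. -/
def IsPerfect (G : SimpleGraph V) : Prop :=
  ∀ s : Set V, (G.induce s).chromaticNumber = ((G.induce s).cliqueNum : ℕ∞)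

/-- The induced subgraph on `S` is a connected bipartite graph. -/
def ConnBipartiteIn (G : SimpleGraph V) (S : Set V) : Prop :=
  (G.induce S).Connected ∧ (G.induce S).Colorable 2

/-- The symmetric difference of two sets. -/
def sd (W W' : Set V) : Set V := (W \ W') ∪ (W' \ W)

section Aux

open Finset

attribute [local instance] Classical.propDecidable

lemma rho_inj {U U' : Set V} (h : rho U = rho U') : U = U' := by
  ext v
  have hv := congrFun h v
  simp only [rho, Set.indicator_apply, Pi.one_apply] at hv
  by_cases h1 : v ∈ U <;> by_cases h2 : v ∈ U' <;> simp_all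

lemma rho_apply_mem {U : Set V} {v : V} (h : v ∈ U) : rho U v = 1 :=
  Set.indicator_of_mem h 1

lemma rho_apply_not_mem {U : Set V} {v : V} (h : v ∉ U) : rho U v = 0 :=
  Set.indicator_of_notMem h 1

variable (G : SimpleGraph V) (W W' : Set V)

/-- degree within the induced graph on the symmetric difference -/
noncomputable def ddeg (v : V) : ℕ :=
  (univ.filter (fun u => u ∈ sd W W' ∧ G.Adj v u)).card

/-- set of adjacent pairs with first coordinate in `S`, second in the symmetric difference -/
noncomputable def pairsE (S : Set V) : Finset (V × V) :=
  univ.filter (fun p : V × V => p.1 ∈ S ∧ p.2 ∈ sd W W' ∧ G.Adj p.1 p.2)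

/-- number of adjacent pairs (a, b) with a ∈ W \ W', b ∈ W' \ W -/
noncomputable def mAB : ℕ :=
  (univ.filter (fun p : V × V => p.1 ∈ W \ W' ∧ p.2 ∈ W' \ W ∧ G.Adj p.1 p.2)).card

/-- the linear functional's coefficients -/
noncomputable def cfun (v : V) : ℝ :=
  if v ∈ W ∩ W' then 1 else if v ∈ sd W W' then (ddeg G W W' v : ℝ) else -1

/-- classical filter of a set as a finset -/
noncomputable def fltr (S : Set V) : Finset V := Finset.univ.filter (· ∈ S)

lemma mem_fltr {S : Set V} {v : V} : v ∈ fltr S ↔ v ∈ S := by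
  simp [fltr]

/-- the linear functional -/
noncomputable def phi (x : V → ℝ) : ℝ := ∑ v, cfun G W W' v * x v

lemma phi_linear : IsLinearMap ℝ (phi G W W') := by
  constructor
  · intro x y
    simp [phi, mul_add, Finset.sum_add_distrib]
  · intro c x
    simp [phi, Finset.mul_sum, smul_eq_mul]
    congr 1; ext v; ring

lemma phi_rho (U : Set V) :
    phi G W W' (rho U) = ∑ v ∈ fltr U, cfun G W W' v := by
  rw [fltr, Finset.sum_filter, phi]
  congr 1; ext v
  by_cases h : v ∈ U
  · simp [rho_apply_mem h, h]
  · simp [rho_apply_not_mem h, h]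

lemma sum_ddeg (S : Set V) :
    ∑ v ∈ fltr S, ddeg G W W' v = (pairsE G W W' S).card := by
  rw [pairsE, Finset.card_eq_sum_card_fiberwise
    (f := Prod.fst) (t := fltr S) (fun p hp => by
      simp only [Finset.mem_coe, mem_fltr, Finset.mem_filter, Finset.mem_univ, true_and] at hp ⊢
      exact hp.1)]
  apply Finset.sum_congr rfl
  intro v hv
  simp only [mem_fltr, Finset.mem_filter, Finset.mem_univ, true_and] at hv
  rw [ddeg]
  apply Finset.card_bij (fun u _ => (v, u))
  · intro u hu
    simp only [mem_fltr, Finset.mem_filter, Finset.mem_univ, true_and] at hu ⊢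
    exact ⟨⟨hv, hu.1, hu.2⟩, by trivial⟩
  · intro u1 h1 u2 h2 h
    simpa using congrArg Prod.snd h
  · intro p hp
    simp only [mem_fltr, Finset.mem_filter, Finset.mem_univ, true_and] at hp
    obtain ⟨⟨h1, h2, h3⟩, h4⟩ := hp
    refine ⟨p.2, ?_, ?_⟩
    · simp only [mem_fltr, Finset.mem_filter, Finset.mem_univ, true_and]
      exact ⟨h2, h4 ▸ h3⟩
    · exact Prod.ext h4.symm rfl

variable {G W W'}

lemma sd_mem_cases {v : V} (h : v ∈ sd W W') : v ∈ W \ W' ∨ v ∈ W' \ W := h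

/-- the swap map sends pairs from a stable trace into A×B adjacent pairs -/
lemma swap_mapsto (hW : IsStable G W) (hW' : IsStable G W') {U : Set V} {p : V × V}
    (hp : p ∈ pairsE G W W' (U ∩ sd W W')) :
    (if p.1 ∈ W \ W' then p else (p.2, p.1)) ∈
      univ.filter (fun p : V × V => p.1 ∈ W \ W' ∧ p.2 ∈ W' \ W ∧ G.Adj p.1 p.2) := by
  simp only [pairsE, Finset.mem_filter, Finset.mem_univ, true_and] at hp ⊢
  obtain ⟨⟨hp1U, hp1sd⟩, hp2sd, hadj⟩ := hp
  by_cases hA : p.1 ∈ W \ W'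
  · rw [if_pos hA]
    refine ⟨hA, ?_, hadj⟩
    rcases sd_mem_cases hp2sd with h | h
    · exact absurd hadj (hW _ hA.1 _ h.1)
    · exact h
  · have hB : p.1 ∈ W' \ W := by
      rcases sd_mem_cases hp1sd with h | h
      · exact absurd h hA
      · exact h
    rw [if_neg hA]
    have h2A : p.2 ∈ W \ W' := by
      rcases sd_mem_cases hp2sd with h | h
      · exact h
      · exact absurd hadj (hW' _ hB.1 _ h.1)
    exact ⟨h2A, hB, hadj.symm⟩

lemma swap_inj {U : Set V} (hU : IsStable G U) {p q : V × V}
    (hp : p ∈ pairsE G W W' (U ∩ sd W W')) (hq : q ∈ pairsE G W W' (U ∩ sd W W'))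
    (hpq : (if p.1 ∈ W \ W' then p else (p.2, p.1)) =
      (if q.1 ∈ W \ W' then q else (q.2, q.1))) : p = q := by
  simp only [pairsE, Finset.mem_filter, Finset.mem_univ, true_and] at hp hq
  obtain ⟨⟨hp1U, hp1sd⟩, hp2sd, hpadj⟩ := hp
  obtain ⟨⟨hq1U, hq1sd⟩, hq2sd, hqadj⟩ := hq
  by_cases hA : p.1 ∈ W \ W' <;> by_cases hA' : q.1 ∈ W \ W'
  · rw [if_pos hA, if_pos hA'] at hpq; exact hpq
  · rw [if_pos hA, if_neg hA'] at hpq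
    exfalso
    have h2 : p.2 = q.1 := congrArg Prod.snd hpq
    exact hU _ hp1U _ hq1U (h2 ▸ hpadj)
  · rw [if_neg hA, if_pos hA'] at hpq
    exfalso
    have h2 : p.2 = q.1 := congrArg Prod.fst hpq
    exact hU _ hp1U _ hq1U (h2 ▸ hpadj)
  · rw [if_neg hA, if_neg hA'] at hpq
    have h1 : p.2 = q.2 := congrArg Prod.fst hpq
    have h2 : p.1 = q.1 := congrArg Prod.snd hpq
    exact Prod.ext h2 h1

/-- key inequality: pairs from a stable trace inject into A×B adjacent pairs -/
lemma pairs_card_le (hW : IsStable G W) (hW' : IsStable G W') {U : Set V}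
    (hU : IsStable G U) :
    (pairsE G W W' (U ∩ sd W W')).card ≤ mAB G W W' := by
  apply Finset.card_le_card_of_injOn
    (fun p => if p.1 ∈ W \ W' then p else (p.2, p.1))
  · intro p hp
    exact swap_mapsto hW hW' hp
  · intro p hp q hq hpq
    exact swap_inj hU (Finset.mem_coe.1 hp) (Finset.mem_coe.1 hq) hpq

/-- equality implies every A-B edge is covered by U -/
lemma pairs_card_eq_cover (hW : IsStable G W) (hW' : IsStable G W') {U : Set V}
    (hU : IsStable G U) (heq : (pairsE G W W' (U ∩ sd W W')).card = mAB G W W') :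
    ∀ a b, a ∈ W \ W' → b ∈ W' \ W → G.Adj a b → a ∈ U ∨ b ∈ U := by
  intro a b ha hb hadj
  have hsurj := Finset.surj_on_of_inj_on_of_card_le
    (s := pairsE G W W' (U ∩ sd W W'))
    (t := univ.filter (fun p : V × V => p.1 ∈ W \ W' ∧ p.2 ∈ W' \ W ∧ G.Adj p.1 p.2))
    (fun p _ => if p.1 ∈ W \ W' then p else (p.2, p.1))
    (fun p hp => swap_mapsto hW hW' hp)
    (fun p q hp hq h => swap_inj hU hp hq h) (le_of_eq heq.symm)
  obtain ⟨p, hp, hfp⟩ := hsurj (a, b) (by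
    simp only [mem_fltr, Finset.mem_filter, Finset.mem_univ, true_and]; exact ⟨ha, hb, hadj⟩)
  simp only [pairsE, Finset.mem_filter, Finset.mem_univ, true_and] at hp
  replace hfp : (a, b) = if p.1 ∈ W \ W' then p else (p.2, p.1) := hfp
  by_cases hA : p.1 ∈ W \ W'
  · rw [if_pos hA] at hfp
    left
    have : a = p.1 := congrArg Prod.fst hfp
    rw [this]; exact hp.1.1
  · rw [if_neg hA] at hfp
    right
    have : b = p.1 := congrArg Prod.snd hfp
    rw [this]; exact hp.1.1

lemma W_inter_sd : W ∩ sd W W' = W \ W' := by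
  ext v; simp only [sd, Set.mem_inter_iff, Set.mem_union, Set.mem_diff]; tauto

lemma W'_inter_sd : W' ∩ sd W W' = W' \ W := by
  ext v; simp only [sd, Set.mem_inter_iff, Set.mem_union, Set.mem_diff]; tauto

lemma pairsE_A (hW : IsStable G W) : pairsE G W W' (W \ W') =
    univ.filter (fun p : V × V => p.1 ∈ W \ W' ∧ p.2 ∈ W' \ W ∧ G.Adj p.1 p.2) := by
  ext p
  simp only [pairsE, Finset.mem_filter, Finset.mem_univ, true_and]
  constructor
  · rintro ⟨h1, h2, h3⟩
    refine ⟨h1, ?_, h3⟩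
    rcases sd_mem_cases h2 with h | h
    · exact absurd h3 (hW _ h1.1 _ h.1)
    · exact h
  · rintro ⟨h1, h2, h3⟩
    exact ⟨h1, Or.inr h2, h3⟩

lemma pairsE_B_card (hW' : IsStable G W') :
    (pairsE G W W' (W' \ W)).card = mAB G W W' := by
  rw [mAB]
  apply Finset.card_bij (fun p _ => (p.2, p.1))
  · intro p hp
    simp only [pairsE, Finset.mem_filter, Finset.mem_univ, true_and] at hp ⊢
    obtain ⟨h1, h2, h3⟩ := hp
    have : p.2 ∈ W \ W' := by
      rcases sd_mem_cases h2 with h | h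
      · exact h
      · exact absurd h3 (hW' _ h1.1 _ h.1)
    exact ⟨this, h1, h3.symm⟩
  · intro p hp q hq h
    have h1 : p.1 = q.1 := congrArg Prod.snd h
    have h2 : p.2 = q.2 := congrArg Prod.fst h
    exact Prod.ext h1 h2
  · intro p hp
    simp only [mem_fltr, Finset.mem_filter, Finset.mem_univ, true_and] at hp
    refine ⟨(p.2, p.1), ?_, rfl⟩
    simp only [pairsE, Finset.mem_filter, Finset.mem_univ, true_and]
    exact ⟨hp.2.1, Or.inl hp.1, hp.2.2.symm⟩


lemma sd_not_inter {v : V} (h : v ∈ sd W W') : v ∉ W ∩ W' := by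
  rcases h with h | h
  · exact fun hv => h.2 hv.2
  · exact fun hv => h.2 hv.1

lemma phi_rho_val (U : Set V) :
    phi G W W' (rho U) =
      ((fltr (U ∩ (W ∩ W'))).card : ℝ)
      + ((∑ v ∈ fltr (U ∩ sd W W'), ddeg G W W' v : ℕ) : ℝ)
      - ((fltr (U \ (W ∪ W'))).card : ℝ) := by
  rw [phi_rho]
  have hsplit : fltr U =
      (fltr (U ∩ (W ∩ W')) ∪ fltr (U ∩ sd W W'))
        ∪ fltr (U \ (W ∪ W')) := by
    ext v
    simp only [mem_fltr, Finset.mem_filter, Finset.mem_univ, true_and, Finset.mem_union,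
      Set.mem_inter_iff, Set.mem_diff, Set.mem_union, sd]
    tauto
  have hd12 : Disjoint (fltr (U ∩ (W ∩ W'))) (fltr (U ∩ sd W W')) := by
    rw [Finset.disjoint_left]
    intro v h1 h2
    simp only [mem_fltr, Finset.mem_filter, Finset.mem_univ, true_and, Set.mem_inter_iff] at h1 h2
    exact sd_not_inter h2.2 h1.2
  have hd3 : Disjoint (fltr (U ∩ (W ∩ W')) ∪ fltr (U ∩ sd W W'))
      (fltr (U \ (W ∪ W'))) := by
    rw [Finset.disjoint_left]
    intro v h1 h2
    simp only [mem_fltr, Finset.mem_filter, Finset.mem_univ, true_and, Finset.mem_union,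
      Set.mem_inter_iff, Set.mem_diff, Set.mem_union, sd] at h1 h2
    tauto
  rw [hsplit, Finset.sum_union hd3, Finset.sum_union hd12]
  have e1 : ∑ v ∈ fltr (U ∩ (W ∩ W')), cfun G W W' v =
      ((fltr (U ∩ (W ∩ W'))).card : ℝ) := by
    rw [Finset.sum_congr rfl (fun v hv => ?_), Finset.sum_const, nsmul_eq_mul, mul_one]
    simp only [mem_fltr, Finset.mem_filter, Finset.mem_univ, true_and, Set.mem_inter_iff] at hv
    exact if_pos hv.2
  have e2 : ∑ v ∈ fltr (U ∩ sd W W'), cfun G W W' v =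
      ((∑ v ∈ fltr (U ∩ sd W W'), ddeg G W W' v : ℕ) : ℝ) := by
    rw [Nat.cast_sum]
    refine Finset.sum_congr rfl (fun v hv => ?_)
    simp only [mem_fltr, Finset.mem_filter, Finset.mem_univ, true_and, Set.mem_inter_iff] at hv
    rw [cfun, if_neg (sd_not_inter hv.2), if_pos hv.2]
  have e3 : ∑ v ∈ fltr (U \ (W ∪ W')), cfun G W W' v =
      -((fltr (U \ (W ∪ W'))).card : ℝ) := by
    rw [Finset.sum_congr rfl (fun v hv => ?_), Finset.sum_const, nsmul_eq_mul, mul_neg_one]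
    simp only [mem_fltr, Finset.mem_filter, Finset.mem_univ, true_and, Set.mem_diff,
      Set.mem_union] at hv
    have h1 : v ∉ W ∩ W' := fun h => hv.2 (Or.inl h.1)
    have h2 : v ∉ sd W W' := by
      rintro (h | h)
      · exact hv.2 (Or.inl h.1)
      · exact hv.2 (Or.inr h.1)
    rw [cfun, if_neg h1, if_neg h2]
  rw [e1, e2, e3]
  ring

lemma fltr_empty : fltr (∅ : Set V) = ∅ := by
  ext v; simp [mem_fltr]

lemma filter_set_congr {S T : Set V} (h : ∀ v, v ∈ S ↔ v ∈ T) :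
    fltr S = fltr T := by
  ext v; simp only [mem_fltr, Finset.mem_filter, Finset.mem_univ, true_and]; exact h v

lemma phi_rho_W (hW : IsStable G W) : phi G W W' (rho W) =
    ((fltr (W ∩ W')).card : ℝ) + (mAB G W W' : ℝ) := by
  rw [phi_rho_val]
  rw [filter_set_congr (S := W ∩ (W ∩ W')) (T := W ∩ W')
    (by intro v; simp only [Set.mem_inter_iff]; tauto)]
  rw [filter_set_congr (S := W ∩ sd W W') (T := W \ W')
    (fun v => iff_of_eq (congrArg (v ∈ ·) W_inter_sd))]
  rw [filter_set_congr (S := W \ (W ∪ W')) (T := (∅ : Set V))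
    (by intro v; simp only [Set.mem_diff, Set.mem_union, Set.mem_empty_iff_false]; tauto)]
  have h5 : ∑ v ∈ fltr (W \ W'), ddeg G W W' v = mAB G W W' := by
    rw [sum_ddeg, pairsE_A hW, mAB]
  rw [h5, fltr_empty]
  simp

lemma phi_rho_W' (hW' : IsStable G W') : phi G W W' (rho W') =
    ((fltr (W ∩ W')).card : ℝ) + (mAB G W W' : ℝ) := by
  rw [phi_rho_val]
  rw [filter_set_congr (S := W' ∩ (W ∩ W')) (T := W ∩ W')
    (by intro v; simp only [Set.mem_inter_iff]; tauto)]
  rw [filter_set_congr (S := W' ∩ sd W W') (T := W' \ W)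
    (fun v => iff_of_eq (congrArg (v ∈ ·) W'_inter_sd))]
  rw [filter_set_congr (S := W' \ (W ∪ W')) (T := (∅ : Set V))
    (by intro v; simp only [Set.mem_diff, Set.mem_union, Set.mem_empty_iff_false]; tauto)]
  have h5 : ∑ v ∈ fltr (W' \ W), ddeg G W W' v = mAB G W W' := by
    rw [sum_ddeg, pairsE_B_card hW']
  rw [h5, fltr_empty]
  simp

lemma phi_rho_le (hW : IsStable G W) (hW' : IsStable G W') {U : Set V}
    (hU : IsStable G U) :
    phi G W W' (rho U) ≤ phi G W W' (rho W) ∧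
    (phi G W W' (rho U) = phi G W W' (rho W) →
      (W ∩ W' ⊆ U ∧ U ⊆ W ∪ W' ∧
        ∀ a b, a ∈ W \ W' → b ∈ W' \ W → G.Adj a b → a ∈ U ∨ b ∈ U)) := by
  rw [phi_rho_val, phi_rho_W hW]
  have hb : ∑ v ∈ fltr (U ∩ sd W W'), ddeg G W W' v = (pairsE G W W' (U ∩ sd W W')).card :=
    sum_ddeg G W W' _
  have hble : (pairsE G W W' (U ∩ sd W W')).card ≤ mAB G W W' := pairs_card_le hW hW' hU
  have hsub : fltr (U ∩ (W ∩ W')) ⊆ fltr (W ∩ W') := by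
    intro v hv
    simp only [mem_fltr, Finset.mem_filter, Finset.mem_univ, true_and, Set.mem_inter_iff] at hv ⊢
    exact hv.2
  have hale : (fltr (U ∩ (W ∩ W'))).card ≤ (fltr (W ∩ W')).card :=
    Finset.card_le_card hsub
  constructor
  · have c1 : ((fltr (U ∩ (W ∩ W'))).card : ℝ) ≤ ((fltr (W ∩ W')).card : ℝ) := by
      exact_mod_cast hale
    have c2 : ((∑ v ∈ fltr (U ∩ sd W W'), ddeg G W W' v : ℕ) : ℝ) ≤ (mAB G W W' : ℝ) := by
      exact_mod_cast hb ▸ hble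
    have c3 : (0 : ℝ) ≤ ((fltr (U \ (W ∪ W'))).card : ℝ) := by positivity
    linarith
  · intro heq
    have c1 : ((fltr (U ∩ (W ∩ W'))).card : ℝ) ≤ ((fltr (W ∩ W')).card : ℝ) := by
      exact_mod_cast hale
    have c2 : ((∑ v ∈ fltr (U ∩ sd W W'), ddeg G W W' v : ℕ) : ℝ) ≤ (mAB G W W' : ℝ) := by
      exact_mod_cast hb ▸ hble
    have c3 : (0 : ℝ) ≤ ((fltr (U \ (W ∪ W'))).card : ℝ) := by positivity
    have ea : ((fltr (U ∩ (W ∩ W'))).card : ℝ) = ((fltr (W ∩ W')).card : ℝ) := by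
      linarith
    have ebr : ((∑ v ∈ fltr (U ∩ sd W W'), ddeg G W W' v : ℕ) : ℝ) = (mAB G W W' : ℝ) := by
      linarith
    have ec : ((fltr (U \ (W ∪ W'))).card : ℝ) = 0 := by linarith
    refine ⟨?_, ?_, ?_⟩
    · -- W ∩ W' ⊆ U
      have ea' : (fltr (U ∩ (W ∩ W'))).card = (fltr (W ∩ W')).card := by
        exact_mod_cast ea
      have := Finset.eq_of_subset_of_card_le hsub (le_of_eq ea'.symm)
      intro v hv
      have hv' : v ∈ fltr (W ∩ W') := by
        simp only [mem_fltr, Finset.mem_filter, Finset.mem_univ, true_and]; exact hv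
      rw [← this] at hv'
      simp only [mem_fltr, Finset.mem_filter, Finset.mem_univ, true_and, Set.mem_inter_iff] at hv'
      exact hv'.1
    · -- U ⊆ W ∪ W'
      have ec' : (fltr (U \ (W ∪ W'))).card = 0 := by exact_mod_cast ec
      rw [Finset.card_eq_zero] at ec'
      intro v hv
      by_contra hvn
      have : v ∈ fltr (U \ (W ∪ W')) := by
        simp only [mem_fltr, Finset.mem_filter, Finset.mem_univ, true_and, Set.mem_diff]
        exact ⟨hv, hvn⟩
      rw [ec'] at this
      exact absurd this (Finset.notMem_empty v)
    · -- cover property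
      have eb' : (pairsE G W W' (U ∩ sd W W')).card = mAB G W W' := by
        have : ((∑ v ∈ fltr (U ∩ sd W W'), ddeg G W W' v : ℕ) : ℝ)
            = ((pairsE G W W' (U ∩ sd W W')).card : ℝ) := by exact_mod_cast hb
        have := ebr.symm.trans this
        exact_mod_cast this.symm
      exact pairs_card_eq_cover hW hW' hU eb'

lemma eq_W_or_W'_of_max (hW : IsStable G W) (hW' : IsStable G W') {U : Set V}
    (hU : IsStable G U) (hconn : (G.induce (sd W W')).Connected)
    (h1 : W ∩ W' ⊆ U) (h2 : U ⊆ W ∪ W')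
    (hcov : ∀ a b, a ∈ W \ W' → b ∈ W' \ W → G.Adj a b → a ∈ U ∨ b ∈ U) :
    U = W ∨ U = W' := by
  have key : ∀ x y : ↑(sd W W'), (G.induce (sd W W')).Adj x y →
      (((x : V) ∈ U ↔ (x : V) ∈ W \ W') ↔ ((y : V) ∈ U ↔ (y : V) ∈ W \ W')) := by
    intro x y hxy
    have hadj : G.Adj (x : V) (y : V) := hxy
    have hx := x.2
    have hy := y.2
    have notAA : ¬((x : V) ∈ W \ W' ∧ (y : V) ∈ W \ W') := fun ⟨h, h'⟩ => hW _ h.1 _ h'.1 hadj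
    have notBB : ¬((x : V) ∈ W' \ W ∧ (y : V) ∈ W' \ W) := fun ⟨h, h'⟩ => hW' _ h.1 _ h'.1 hadj
    have notUU : ¬((x : V) ∈ U ∧ (y : V) ∈ U) := fun ⟨h, h'⟩ => hU _ h _ h' hadj
    have hxAB : (x : V) ∈ W \ W' ∨ (x : V) ∈ W' \ W := sd_mem_cases hx
    have hyAB : (y : V) ∈ W \ W' ∨ (y : V) ∈ W' \ W := sd_mem_cases hy
    have hxnAB : ¬((x : V) ∈ W \ W' ∧ (x : V) ∈ W' \ W) := fun ⟨h, h'⟩ => h'.2 h.1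
    have hynAB : ¬((y : V) ∈ W \ W' ∧ (y : V) ∈ W' \ W) := fun ⟨h, h'⟩ => h'.2 h.1
    have atleast : (x : V) ∈ U ∨ (y : V) ∈ U := by
      rcases hxAB with h | h
      · have h' : (y : V) ∈ W' \ W := by
          rcases hyAB with h'' | h''
          · exact absurd ⟨h, h''⟩ notAA
          · exact h''
        exact hcov _ _ h h' hadj
      · have h' : (y : V) ∈ W \ W' := by
          rcases hyAB with h'' | h''
          · exact h''
          · exact absurd ⟨h, h''⟩ notBB
        exact Or.symm (hcov _ _ h' h hadj.symm)
    tauto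
  have const : ∀ x y : ↑(sd W W'),
      (((x : V) ∈ U ↔ (x : V) ∈ W \ W') ↔ ((y : V) ∈ U ↔ (y : V) ∈ W \ W')) := by
    intro x y
    obtain ⟨w⟩ := hconn.preconnected x y
    induction w with
    | nil => exact Iff.rfl
    | cons h p ih => exact (key _ _ h).trans ih
  obtain ⟨d0⟩ := hconn.nonempty
  by_cases h0 : (d0 : V) ∈ U ↔ (d0 : V) ∈ W \ W'
  · left
    ext v
    constructor
    · intro hv
      rcases h2 hv with hw | hw'
      · exact hw
      · by_cases hvW : v ∈ W
        · exact hvW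
        · exfalso
          have hvsd : v ∈ sd W W' := Or.inr ⟨hw', hvW⟩
          exact hvW ((((const ⟨v, hvsd⟩ d0).mpr h0).mp hv).1)
    · intro hv
      by_cases hvW' : v ∈ W'
      · exact h1 ⟨hv, hvW'⟩
      · have hvsd : v ∈ sd W W' := Or.inl ⟨hv, hvW'⟩
        exact ((const ⟨v, hvsd⟩ d0).mpr h0).mpr ⟨hv, hvW'⟩
  · right
    ext v
    constructor
    · intro hv
      by_cases hvW' : v ∈ W'
      · exact hvW'
      · exfalso
        rcases h2 hv with hw | hw'
        · have hvsd : v ∈ sd W W' := Or.inl ⟨hw, hvW'⟩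
          exact h0 ((const ⟨v, hvsd⟩ d0).mp (iff_of_true hv ⟨hw, hvW'⟩))
        · exact hvW' hw'
    · intro hv
      by_cases hvW : v ∈ W
      · exact h1 ⟨hvW, hv⟩
      · have hvsd : v ∈ sd W W' := Or.inr ⟨hv, hvW⟩
        by_contra hvU
        exact h0 ((const ⟨v, hvsd⟩ d0).mp (iff_of_false hvU (fun h => hvW h.1)))

variable (G W W')

lemma rho_mem_stab {U : Set V} (hU : IsStable G U) : rho U ∈ stabPolytope G :=
  subset_convexHull ℝ _ ⟨U, hU, rfl⟩

lemma phi_le_on_stab {M : ℝ} (hM : ∀ U : Set V, IsStable G U → phi G W W' (rho U) ≤ M) :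
    ∀ x ∈ stabPolytope G, phi G W W' x ≤ M := by
  intro x hx
  have hconv : Convex ℝ {y : V → ℝ | phi G W W' y ≤ M} :=
    convex_halfSpace_le (phi_linear G W W') M
  have hsub : stabPolytope G ⊆ {y | phi G W W' y ≤ M} := by
    rw [stabPolytope]
    apply convexHull_min _ hconv
    rintro y ⟨U, hU, rfl⟩
    exact hM U hU
  exact hsub hx

lemma mem_segment_of_phi_eq {M : ℝ}
    (hle : ∀ U : Set V, IsStable G U → phi G W W' (rho U) ≤ M)
    (heqc : ∀ U : Set V, IsStable G U → phi G W W' (rho U) = M → rho U = rho W ∨ rho U = rho W')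
    {x : V → ℝ} (hx : x ∈ stabPolytope G) (hphix : phi G W W' x = M) :
    x ∈ segment ℝ (rho W) (rho W') := by
  rw [stabPolytope, _root_.convexHull_eq] at hx
  obtain ⟨ι, t, w, z, hw0, hw1, hz, hcm⟩ := hx
  rw [Finset.centerMass_eq_of_sum_1 _ _ hw1] at hcm
  have hlin := phi_linear G W W'
  set L : (V → ℝ) →ₗ[ℝ] ℝ := IsLinearMap.mk' _ hlin with hL
  have hphi_sum : phi G W W' x = ∑ i ∈ t, w i * phi G W W' (z i) := by
    have hLx : phi G W W' x = L x := rfl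
    rw [hLx, ← hcm, map_sum]
    refine Finset.sum_congr rfl (fun i _ => ?_)
    rw [map_smul, smul_eq_mul]
    rfl
  have hphiz_le : ∀ i ∈ t, phi G W W' (z i) ≤ M := by
    intro i hi
    obtain ⟨U, hU, hzi⟩ := hz i hi
    rw [hzi]
    exact hle U hU
  have hsum0 : ∑ i ∈ t, w i * (M - phi G W W' (z i)) = 0 := by
    have hexp : ∑ i ∈ t, w i * (M - phi G W W' (z i))
        = (∑ i ∈ t, w i) * M - ∑ i ∈ t, w i * phi G W W' (z i) := by
      rw [Finset.sum_mul, ← Finset.sum_sub_distrib]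
      exact Finset.sum_congr rfl (fun i _ => by ring)
    rw [hexp, hw1, one_mul, ← hphi_sum, hphix, sub_self]
  have hkey : ∀ i ∈ t, w i ≠ 0 → phi G W W' (z i) = M := by
    intro i hi hwi
    have hterm := (Finset.sum_eq_zero_iff_of_nonneg (fun j hj =>
      mul_nonneg (hw0 j hj) (by linarith [hphiz_le j hj]))).mp hsum0 i hi
    rcases mul_eq_zero.mp hterm with h | h
    · exact absurd h hwi
    · linarith
  have hz2 : ∀ i ∈ t, w i ≠ 0 → z i = rho W ∨ z i = rho W' := by
    intro i hi hwi
    obtain ⟨U, hU, hzU⟩ := hz i hi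
    have hphiU := hkey i hi hwi
    rw [hzU] at hphiU ⊢
    exact heqc U hU hphiU
  refine ⟨∑ i ∈ t.filter (fun i => z i = rho W), w i,
    ∑ i ∈ t.filter (fun i => ¬ z i = rho W), w i, ?_, ?_, ?_, ?_⟩
  · exact Finset.sum_nonneg (fun i hi => hw0 i (Finset.mem_filter.mp hi).1)
  · exact Finset.sum_nonneg (fun i hi => hw0 i (Finset.mem_filter.mp hi).1)
  · rw [← hw1, Finset.sum_filter_add_sum_filter_not]
  · rw [← hcm, ← Finset.sum_filter_add_sum_filter_not t (fun i => z i = rho W)]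
    rw [Finset.sum_smul, Finset.sum_smul]
    congr 1
    · refine Finset.sum_congr rfl (fun i hi => ?_)
      rw [(Finset.mem_filter.mp hi).2]
    · refine Finset.sum_congr rfl (fun i hi => ?_)
      obtain ⟨hit, hiz⟩ := Finset.mem_filter.mp hi
      by_cases hwi : w i = 0
      · rw [hwi, zero_smul, zero_smul]
      · rcases hz2 i hit hwi with h | h
        · exact absurd h hiz
        · rw [h]

end Aux

theorem stable_edge_iff (G : SimpleGraph V) (hG : IsPerfect G) (W W' : Set V)
    (hW : IsStable G W) (hW' : IsStable G W') (hne : W ≠ W') :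
    IsEdgeOf (stabPolytope G) (rho W) (rho W') ↔ ConnBipartiteIn G (sd W W') := by
  classical
  have hDne : (sd W W').Nonempty := by
    by_contra h
    rw [Set.not_nonempty_iff_eq_empty] at h
    apply hne
    ext v
    constructor
    · intro hv
      by_contra hv'
      have : v ∈ sd W W' := Or.inl ⟨hv, hv'⟩
      rw [h] at this
      exact this
    · intro hv
      by_contra hv'
      have : v ∈ sd W W' := Or.inr ⟨hv, hv'⟩
      rw [h] at this
      exact this
  constructor
  · rintro ⟨hneq, hext⟩
    constructor
    · -- Connectedness
      by_contra hnc
      have hne2 : Nonempty ↑(sd W W') := hDne.to_subtype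
      rw [SimpleGraph.connected_iff] at hnc
      have hnp : ¬ (G.induce (sd W W')).Preconnected := fun hp => hnc ⟨hp, hne2⟩
      rw [SimpleGraph.Preconnected] at hnp
      push_neg at hnp
      obtain ⟨u0, v0, huv⟩ := hnp
      set S1 : Set ↑(sd W W') := {z | (G.induce (sd W W')).Reachable u0 z} with hS1
      set D1 : Set V := Subtype.val '' S1 with hD1
      set D2 : Set V := Subtype.val '' S1ᶜ with hD2
      have hu0 : (u0 : V) ∈ D1 := ⟨u0, SimpleGraph.Reachable.refl u0, rfl⟩
      have hv0 : (v0 : V) ∈ D2 := ⟨v0, huv, rfl⟩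
      have hD1sd : D1 ⊆ sd W W' := by rintro _ ⟨z, _, rfl⟩; exact z.2
      have hD2sd : D2 ⊆ sd W W' := by rintro _ ⟨z, _, rfl⟩; exact z.2
      have hdisj : ∀ v, v ∈ D1 → v ∈ D2 → False := by
        rintro v ⟨z1, hz1, he1⟩ ⟨z2, hz2, he2⟩
        have hz : z1 = z2 := Subtype.ext (he1.trans he2.symm)
        exact hz2 (hz ▸ hz1)
      have hcover : ∀ v, v ∈ sd W W' → v ∈ D1 ∨ v ∈ D2 := by
        intro v hv
        by_cases h : (⟨v, hv⟩ : ↑(sd W W')) ∈ S1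
        · exact Or.inl ⟨⟨v, hv⟩, h, rfl⟩
        · exact Or.inr ⟨⟨v, hv⟩, h, rfl⟩
      have hnoadj : ∀ a ∈ D1, ∀ b ∈ D2, ¬ G.Adj a b := by
        rintro a ⟨z1, hz1, rfl⟩ b ⟨z2, hz2, rfl⟩ hadj
        have hadj' : (G.induce (sd W W')).Adj z1 z2 := hadj
        exact hz2 (hz1.trans hadj'.reachable)
      set U1 : Set V := ((W ∩ W') ∪ ((W \ W') ∩ D1)) ∪ ((W' \ W) ∩ D2) with hU1def
      have hU1stable : IsStable G U1 := by
        rintro a ((ha | ha) | ha) b ((hb | hb) | hb) hadj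
        · exact hW a ha.1 b hb.1 hadj
        · exact hW a ha.1 b hb.1.1 hadj
        · exact hW' a ha.2 b hb.1.1 hadj
        · exact hW a ha.1.1 b hb.1 hadj
        · exact hW a ha.1.1 b hb.1.1 hadj
        · exact hnoadj a ha.2 b hb.2 hadj
        · exact hW' a ha.1.1 b hb.2 hadj
        · exact hnoadj b hb.2 a ha.2 hadj.symm
        · exact hW' a ha.1.1 b hb.1.1 hadj
      set U2 : Set V := ((W ∩ W') ∪ ((W \ W') ∩ D2)) ∪ ((W' \ W) ∩ D1) with hU2def
      have hU2stable : IsStable G U2 := by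
        rintro a ((ha | ha) | ha) b ((hb | hb) | hb) hadj
        · exact hW a ha.1 b hb.1 hadj
        · exact hW a ha.1 b hb.1.1 hadj
        · exact hW' a ha.2 b hb.1.1 hadj
        · exact hW a ha.1.1 b hb.1 hadj
        · exact hW a ha.1.1 b hb.1.1 hadj
        · exact hnoadj b hb.2 a ha.2 hadj.symm
        · exact hW' a ha.1.1 b hb.2 hadj
        · exact hnoadj a ha.2 b hb.2 hadj
        · exact hW' a ha.1.1 b hb.1.1 hadj
      have hsum : ∀ v, rho U1 v + rho U2 v = rho W v + rho W' v := by
        intro v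
        by_cases h1 : v ∈ W <;> by_cases h2 : v ∈ W'
        · have m1 : v ∈ U1 := Or.inl (Or.inl ⟨h1, h2⟩)
          have m2 : v ∈ U2 := Or.inl (Or.inl ⟨h1, h2⟩)
          rw [rho_apply_mem m1, rho_apply_mem m2, rho_apply_mem h1, rho_apply_mem h2]
        · have hA : v ∈ W \ W' := ⟨h1, h2⟩
          rcases hcover v (Or.inl hA) with hd | hd
          · have m1 : v ∈ U1 := Or.inl (Or.inr ⟨hA, hd⟩)
            have m2 : v ∉ U2 := by
              rintro ((h | h) | h)
              · exact h2 h.2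
              · exact hdisj v hd h.2
              · exact h.1.2 h1
            rw [rho_apply_mem m1, rho_apply_not_mem m2, rho_apply_mem h1, rho_apply_not_mem h2]
          · have m2 : v ∈ U2 := Or.inl (Or.inr ⟨hA, hd⟩)
            have m1 : v ∉ U1 := by
              rintro ((h | h) | h)
              · exact h2 h.2
              · exact hdisj v h.2 hd
              · exact h.1.2 h1
            rw [rho_apply_not_mem m1, rho_apply_mem m2, rho_apply_mem h1, rho_apply_not_mem h2]
            ring
        · have hB : v ∈ W' \ W := ⟨h2, h1⟩
          rcases hcover v (Or.inr hB) with hd | hd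
          · have m2 : v ∈ U2 := Or.inr ⟨hB, hd⟩
            have m1 : v ∉ U1 := by
              rintro ((h | h) | h)
              · exact h1 h.1
              · exact h1 h.1.1
              · exact hdisj v hd h.2
            rw [rho_apply_not_mem m1, rho_apply_mem m2, rho_apply_not_mem h1, rho_apply_mem h2]
          · have m1 : v ∈ U1 := Or.inr ⟨hB, hd⟩
            have m2 : v ∉ U2 := by
              rintro ((h | h) | h)
              · exact h1 h.1
              · exact h1 h.1.1
              · exact hdisj v h.2 hd
            rw [rho_apply_mem m1, rho_apply_not_mem m2, rho_apply_not_mem h1, rho_apply_mem h2]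
            ring
        · have m1 : v ∉ U1 := by
            rintro ((h | h) | h)
            · exact h1 h.1
            · exact h1 h.1.1
            · exact h2 h.1.1
          have m2 : v ∉ U2 := by
            rintro ((h | h) | h)
            · exact h1 h.1
            · exact h1 h.1.1
            · exact h2 h.1.1
          rw [rho_apply_not_mem m1, rho_apply_not_mem m2, rho_apply_not_mem h1,
            rho_apply_not_mem h2]
      have hmid : (1/2 : ℝ) • rho W + (1/2 : ℝ) • rho W'
          = (1/2 : ℝ) • rho U1 + (1/2 : ℝ) • rho U2 := by
        funext v
        simp only [Pi.add_apply, Pi.smul_apply, smul_eq_mul]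
        have := hsum v
        linarith
      have hzseg : ((1/2 : ℝ) • rho W + (1/2 : ℝ) • rho W') ∈ segment ℝ (rho W) (rho W') :=
        ⟨1/2, 1/2, by norm_num, by norm_num, by norm_num, rfl⟩
      have hzopen : ((1/2 : ℝ) • rho W + (1/2 : ℝ) • rho W')
          ∈ openSegment ℝ (rho U1) (rho U2) :=
        ⟨1/2, 1/2, by norm_num, by norm_num, by norm_num, hmid.symm⟩
      have hU1seg := (hext.2 (rho_mem_stab G hU1stable) (rho_mem_stab G hU2stable)
        hzseg hzopen)
      obtain ⟨a, b, ha, hb, hab, habeq⟩ := hU1seg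
      have hU1W : rho U1 = rho W := by
        rcases sd_mem_cases (hD1sd hu0) with hA | hB
        · have hm : (u0 : V) ∈ U1 := Or.inl (Or.inr ⟨hA, hu0⟩)
          have hev := congrFun habeq (u0 : V)
          rw [Pi.add_apply, Pi.smul_apply, Pi.smul_apply, rho_apply_mem hm,
            rho_apply_mem hA.1, rho_apply_not_mem hA.2, smul_eq_mul, smul_eq_mul] at hev
          have hb0 : b = 0 := by linarith
          have ha1 : a = 1 := by linarith
          rw [← habeq, hb0, ha1, one_smul, zero_smul, add_zero]
        · have hm : (u0 : V) ∉ U1 := by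
            rintro ((h | h) | h)
            · exact hB.2 h.1
            · exact hB.2 h.1.1
            · exact hdisj (u0 : V) hu0 h.2
          have hev := congrFun habeq (u0 : V)
          rw [Pi.add_apply, Pi.smul_apply, Pi.smul_apply, rho_apply_not_mem hm,
            rho_apply_not_mem hB.2, rho_apply_mem hB.1, smul_eq_mul, smul_eq_mul] at hev
          have hb0 : b = 0 := by linarith
          have ha1 : a = 1 := by linarith
          rw [← habeq, hb0, ha1, one_smul, zero_smul, add_zero]
      have hU1eq : U1 = W := rho_inj hU1W
      rcases sd_mem_cases (hD2sd hv0) with hA | hB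
      · have : (v0 : V) ∈ U1 := by rw [hU1eq]; exact hA.1
        rcases this with ((h | h) | h)
        · exact hA.2 h.2
        · exact hdisj (v0 : V) h.2 hv0
        · exact h.1.2 hA.1
      · have : (v0 : V) ∈ U1 := Or.inr ⟨hB, hv0⟩
        rw [hU1eq] at this
        exact hB.2 this
    · -- Colorable 2
      refine ⟨SimpleGraph.Coloring.mk (fun v => if (v : V) ∈ W then 0 else 1) ?_⟩
      intro a b hadj
      have hadj' : G.Adj (a : V) (b : V) := hadj
      show (if (a : V) ∈ W then (0 : Fin 2) else 1) ≠ (if (b : V) ∈ W then (0 : Fin 2) else 1)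
      by_cases haW : (a : V) ∈ W <;> by_cases hbW : (b : V) ∈ W
      · exact absurd hadj' (hW _ haW _ hbW)
      · rw [if_pos haW, if_neg hbW]
        decide
      · rw [if_neg haW, if_pos hbW]
        decide
      · have haB : (a : V) ∈ W' := by
          rcases sd_mem_cases a.2 with h | h
          · exact absurd h.1 haW
          · exact h.1
        have hbB : (b : V) ∈ W' := by
          rcases sd_mem_cases b.2 with h | h
          · exact absurd h.1 hbW
          · exact h.1
        exact absurd hadj' (hW' _ haB _ hbB)
  · rintro ⟨hconn, -⟩
    set M := phi G W W' (rho W) with hMdef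
    have hle : ∀ U : Set V, IsStable G U → phi G W W' (rho U) ≤ M :=
      fun U hU => (phi_rho_le hW hW' hU).1
    have heqc : ∀ U : Set V, IsStable G U → phi G W W' (rho U) = M →
        rho U = rho W ∨ rho U = rho W' := by
      intro U hU hphiU
      obtain ⟨h1, h2, hcov⟩ := (phi_rho_le hW hW' hU).2 hphiU
      rcases eq_W_or_W'_of_max hW hW' hU hconn h1 h2 hcov with h | h
      · left; rw [h]
      · right; rw [h]
    have hphiW' : phi G W W' (rho W') = M := (phi_rho_W' hW').trans (phi_rho_W hW).symm
    have hsub : segment ℝ (rho W) (rho W') ⊆ stabPolytope G :=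
      (convex_convexHull ℝ _).segment_subset (rho_mem_stab G hW) (rho_mem_stab G hW')
    have hlin := phi_linear G W W'
    have hsegphi : ∀ x ∈ segment ℝ (rho W) (rho W'), phi G W W' x = M := by
      rintro x ⟨a, b, ha, hb, hab, rfl⟩
      have hexp : phi G W W' (a • rho W + b • rho W')
          = a * phi G W W' (rho W) + b * phi G W W' (rho W') := by
        rw [hlin.map_add, hlin.map_smul, hlin.map_smul, smul_eq_mul, smul_eq_mul]
      rw [hexp, ← hMdef, hphiW', ← add_mul, hab, one_mul]
    refine ⟨fun h => hne (rho_inj h), hsub, ?_⟩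
    intro x1 hx1 x2 hx2 x hxseg hxopen
    obtain ⟨a, b, ha, hb, hab, hxeq⟩ := hxopen
    have hphix : phi G W W' x = M := hsegphi x hxseg
    have e1 : phi G W W' x1 ≤ M := phi_le_on_stab G W W' hle x1 hx1
    have e2 : phi G W W' x2 ≤ M := phi_le_on_stab G W W' hle x2 hx2
    have hsumM : a * phi G W W' x1 + b * phi G W W' x2 = M := by
      rw [← hphix, ← hxeq, hlin.map_add, hlin.map_smul, hlin.map_smul, smul_eq_mul, smul_eq_mul]
    have hx1M : phi G W W' x1 = M := by
      by_contra h
      have hlt : phi G W W' x1 < M := lt_of_le_of_ne e1 h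
      have t1 : a * phi G W W' x1 < a * M := mul_lt_mul_of_pos_left hlt ha
      have t2 : b * phi G W W' x2 ≤ b * M := mul_le_mul_of_nonneg_left e2 hb.le
      have t3 : a * M + b * M = M := by rw [← add_mul, hab, one_mul]
      linarith
    have hx2M : phi G W W' x2 = M := by
      by_contra h
      have hlt : phi G W W' x2 < M := lt_of_le_of_ne e2 h
      have t1 : b * phi G W W' x2 < b * M := mul_lt_mul_of_pos_left hlt hb
      have t2 : a * phi G W W' x1 ≤ a * M := mul_le_mul_of_nonneg_left e1 ha.le
      have t3 : a * M + b * M = M := by rw [← add_mul, hab, one_mul]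
      linarith
    exact mem_segment_of_phi_eq G W W' hle heqc hx1 hx1M
end

section
/- Let P be a finite poset and Com(P) its comparability graph. Then the stable set polytope Stab(Com(P)) equals the chain polytope C(P) of P, i.e., the convex hull of indicator vectors of antichains of P equals {x ∈ ℝ^d : x_i ≥ 0 for all i, and Σ_{p ∈ C} x_p ≤ 1 for every maximal chain C of P}. -/
open Set

variable {V : Type*} [Fintype V]

/-- The comparability graph of a poset. -/
def comparabilityGraph (α : Type*) [PartialOrder α] : SimpleGraph α where
  Adj a b := a < b ∨ b < a
  symm := ⟨by intro a b h; tauto⟩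
  loopless := ⟨by intro a h; rcases h with h | h <;> exact lt_irrefl _ h⟩

section Aux

variable {α : Type*} [Fintype α] [PartialOrder α]

private lemma exists_minimal_old' (s : Finset α) (h : s.Nonempty) :
    ∃ a ∈ s, ∀ b ∈ s, ¬ b < a := by
  obtain ⟨a, ha, hmin⟩ := Finset.exists_minimal (s := s) h
  exact ⟨a, ha, fun b hb hlt => hlt.not_ge (hmin hb hlt.le)⟩

private lemma coord_le_one' {x : α → ℝ} (hx0 : ∀ a, 0 ≤ x a)
    (hxC : ∀ C : Set α, IsMaxChain (· ≤ ·) C → ∑ a ∈ C.toFinite.toFinset, x a ≤ 1)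
    (a : α) : x a ≤ 1 := by
  obtain ⟨M, hM, hsub⟩ := (IsChain.singleton (r := (· ≤ ·)) (a := a)).exists_maxChain
  have h1 : x a ≤ ∑ b ∈ M.toFinite.toFinset, x b := by
    apply Finset.single_le_sum (fun b _ => hx0 b)
    rw [Set.Finite.mem_toFinset]
    exact hsub rfl
  exact h1.trans (hxC M hM)

private lemma hard_dir (n : ℕ) :
    ∀ x : α → ℝ, (∀ a, 0 ≤ x a) →
      (∀ C : Set α, IsMaxChain (· ≤ ·) C → ∑ a ∈ C.toFinite.toFinset, x a ≤ 1) →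
      ({a | x a ≠ 0}.toFinite.toFinset).card ≤ n →
      x ∈ stabPolytope (comparabilityGraph α) := by
  induction n with
  | zero =>
    intro x hx0 hxC hcard
    apply subset_convexHull
    refine ⟨∅, fun a ha => absurd ha (Set.notMem_empty a), ?_⟩
    funext a
    have hxa : x a = 0 := by
      by_contra h
      have ha : a ∈ {a | x a ≠ 0}.toFinite.toFinset := by
        rw [Set.Finite.mem_toFinset]; exact h
      have := Finset.card_pos.mpr ⟨a, ha⟩
      omega
    simp [rho, hxa]
  | succ n ih =>
    intro x hx0 hxC hcard
    classical
    set S : Set α := {a | x a ≠ 0} with hS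
    by_cases hSe : S = ∅
    · apply subset_convexHull
      refine ⟨∅, fun a ha => absurd ha (Set.notMem_empty a), ?_⟩
      funext a
      have hxa : x a = 0 := by
        by_contra h
        have : a ∈ S := h
        rw [hSe] at this
        exact this
      simp [rho, hxa]
    · have hSne : S.Nonempty := Set.nonempty_iff_ne_empty.mpr hSe
      set A : Set α := {a ∈ S | ∀ b ∈ S, ¬ b < a} with hA
      have hAS : A ⊆ S := fun a ha => ha.1
      have below : ∀ m ∈ S, ∃ a ∈ A, a ≤ m := by
        intro m hm
        obtain ⟨a, ha, hamin⟩ := exists_minimal_old'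
          ((S.toFinite.toFinset).filter (· ≤ m))
          ⟨m, by rw [Finset.mem_filter, Set.Finite.mem_toFinset]; exact ⟨hm, le_refl m⟩⟩
        rw [Finset.mem_filter, Set.Finite.mem_toFinset] at ha
        refine ⟨a, ⟨ha.1, ?_⟩, ha.2⟩
        intro b hb hba
        apply hamin b _ hba
        rw [Finset.mem_filter, Set.Finite.mem_toFinset]
        exact ⟨hb, hba.le.trans ha.2⟩
      have hAstable : IsStable (comparabilityGraph α) A := by
        intro a ha b hb hadj
        have hadj' : a < b ∨ b < a := hadj
        rcases hadj' with h | h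
        · exact hb.2 a (hAS ha) h
        · exact ha.2 b (hAS hb) h
      obtain ⟨m₀, hm₀⟩ := hSne
      obtain ⟨aA, haA, _⟩ := below m₀ hm₀
      obtain ⟨a₀, ha₀, ha₀min⟩ := Finset.exists_min_image (A.toFinite.toFinset) x
        ⟨aA, by rw [Set.Finite.mem_toFinset]; exact haA⟩
      rw [Set.Finite.mem_toFinset] at ha₀
      set l := x a₀ with hl
      have ha₀S : a₀ ∈ S := hAS ha₀
      have hxa₀ : x a₀ ≠ 0 := ha₀S
      have hl0 : 0 < l := lt_of_le_of_ne (hx0 a₀) (Ne.symm hxa₀)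
      have hl1 : l ≤ 1 := coord_le_one' hx0 hxC a₀
      have hlleA : ∀ a ∈ A, l ≤ x a := by
        intro a ha
        exact ha₀min a (by rw [Set.Finite.mem_toFinset]; exact ha)
      have KL : ∀ C : Set α, IsMaxChain (· ≤ ·) C → C ∩ A = ∅ →
          ∑ c ∈ C.toFinite.toFinset, x c ≤ 1 - l := by
        intro C hC hCA
        by_cases hCS : C ∩ S = ∅
        · have hz : ∀ c ∈ C.toFinite.toFinset, x c = 0 := by
            intro c hc
            rw [Set.Finite.mem_toFinset] at hc
            by_contra h
            exact (Set.eq_empty_iff_forall_notMem.mp hCS c) ⟨hc, h⟩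
          rw [Finset.sum_eq_zero hz]
          linarith
        · obtain ⟨m, hm, hmmin⟩ := exists_minimal_old' ((C ∩ S).toFinite.toFinset)
            (by rw [Set.Finite.toFinset_nonempty]; exact Set.nonempty_iff_ne_empty.mpr hCS)
          rw [Set.Finite.mem_toFinset] at hm
          have hleast : ∀ c ∈ C ∩ S, m ≤ c := by
            intro c hc
            rcases eq_or_ne c m with rfl | hne
            · exact le_refl _
            · rcases hC.1 hc.1 hm.1 hne with h | h
              · exact absurd (lt_of_le_of_ne h hne)
                  (hmmin c (by rw [Set.Finite.mem_toFinset]; exact hc))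
              · exact h
          obtain ⟨a, haA', ham⟩ := below m hm.2
          have hanem : a ≠ m := by
            rintro rfl
            exact (Set.eq_empty_iff_forall_notMem.mp hCA a) ⟨hm.1, haA'⟩
          have haltm : a < m := lt_of_le_of_ne ham hanem
          have hchainD : IsChain (· ≤ ·) (insert a (C ∩ Set.Ici m)) := by
            apply IsChain.insert ((hC.1).mono Set.inter_subset_left)
            intro b hb _
            exact Or.inl (haltm.le.trans hb.2)
          obtain ⟨M, hM, hDM⟩ := hchainD.exists_maxChain
          have hsum1 : ∑ c ∈ C.toFinite.toFinset, x c
              = ∑ c ∈ (C ∩ Set.Ici m).toFinite.toFinset, x c := by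
            apply (Finset.sum_subset ?_ ?_).symm
            · intro c hc
              rw [Set.Finite.mem_toFinset] at hc ⊢
              exact hc.1
            · intro c hc hcn
              rw [Set.Finite.mem_toFinset] at hc hcn
              by_contra h
              exact hcn ⟨hc, hleast c ⟨hc, h⟩⟩
          have hnotmem : a ∉ (C ∩ Set.Ici m).toFinite.toFinset := by
            rw [Set.Finite.mem_toFinset]
            exact fun h => absurd h.2 (not_le_of_gt haltm)
          have hax : x a + ∑ c ∈ (C ∩ Set.Ici m).toFinite.toFinset, x c
              ≤ ∑ c ∈ M.toFinite.toFinset, x c := by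
            rw [← Finset.sum_insert hnotmem]
            apply Finset.sum_le_sum_of_subset_of_nonneg
            · intro c hc
              rw [Finset.mem_insert, Set.Finite.mem_toFinset] at hc
              rw [Set.Finite.mem_toFinset]
              apply hDM
              rcases hc with rfl | hc
              · exact Set.mem_insert _ _
              · exact Set.mem_insert_of_mem _ hc
            · exact fun c _ _ => hx0 c
          have hla : l ≤ x a := hlleA a haA'
          have hMle := hxC M hM
          rw [hsum1]
          linarith
      rcases eq_or_lt_of_le hl1 with hl1' | hl1'
      · -- l = 1 : x = rho A
        apply subset_convexHull
        refine ⟨A, hAstable, ?_⟩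
        have hxA1 : ∀ a ∈ A, x a = 1 := by
          intro a ha
          refine le_antisymm (coord_le_one' hx0 hxC a) ?_
          rw [← hl1']
          exact hlleA a ha
        have hSA : S ⊆ A := by
          intro m hm
          obtain ⟨a, ha, ham⟩ := below m hm
          rcases eq_or_lt_of_le ham with rfl | hlt
          · exact ha
          · exfalso
            have hpair : IsChain (· ≤ ·) ({a, m} : Set α) := by
              apply IsChain.singleton.insert
              intro b hb _
              rw [Set.mem_singleton_iff] at hb
              subst hb
              exact Or.inl hlt.le
            obtain ⟨M, hM, hsub⟩ := hpair.exists_maxChain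
            have h2 : x a + x m ≤ ∑ c ∈ M.toFinite.toFinset, x c := by
              rw [← Finset.sum_pair (ne_of_lt hlt)]
              apply Finset.sum_le_sum_of_subset_of_nonneg
              · intro c hc
                rw [Set.Finite.mem_toFinset]
                apply hsub
                simpa using hc
              · exact fun c _ _ => hx0 c
            have h3 := hxC M hM
            have h4 : x a = 1 := hxA1 a ha
            have h5 : x m ≠ 0 := hm
            have h6 : 0 < x m := lt_of_le_of_ne (hx0 m) (Ne.symm h5)
            linarith
        funext b
        by_cases hb : b ∈ A
        · have := hxA1 b hb
          simp [rho, Set.indicator_apply, hb, this]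
        · have hbS : b ∉ S := fun h => hb (hSA h)
          have hxb : x b = 0 := not_not.mp hbS
          simp [rho, Set.indicator_apply, hb, hxb]
      · -- l < 1
        set z : α → ℝ := fun b => (1 - l)⁻¹ * (x b - l * rho A b) with hzdef
        have h1l : 0 < 1 - l := by linarith
        have hrhoA : ∀ b, rho A b = if b ∈ A then 1 else 0 := by
          intro b
          simp [rho, Set.indicator_apply]
        have hz0 : ∀ b, 0 ≤ z b := by
          intro b
          apply mul_nonneg (le_of_lt (inv_pos.mpr h1l))
          rw [hrhoA]
          by_cases hb : b ∈ A
          · simp only [hb, if_true]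
            have := hlleA b hb
            linarith
          · simp only [hb, if_false]
            have := hx0 b
            linarith
        have hzC : ∀ C : Set α, IsMaxChain (· ≤ ·) C → ∑ c ∈ C.toFinite.toFinset, z c ≤ 1 := by
          intro C hC
          have key : ∑ c ∈ C.toFinite.toFinset, (x c - l * rho A c) ≤ 1 - l := by
            by_cases hCA : C ∩ A = ∅
            · have heach : ∀ c ∈ C.toFinite.toFinset, x c - l * rho A c = x c := by
                intro c hc
                rw [Set.Finite.mem_toFinset] at hc
                have hcA : c ∉ A := fun h => (Set.eq_empty_iff_forall_notMem.mp hCA c) ⟨hc, h⟩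
                rw [hrhoA]
                simp [hcA]
              rw [Finset.sum_congr rfl heach]
              exact KL C hC hCA
            · obtain ⟨a₁, ha₁⟩ := Set.nonempty_iff_ne_empty.mpr hCA
              have hsum_rho : (1:ℝ) ≤ ∑ c ∈ C.toFinite.toFinset, rho A c := by
                have h1 : rho A a₁ = 1 := by rw [hrhoA]; simp [ha₁.2]
                rw [← h1]
                apply Finset.single_le_sum
                · intro c _
                  rw [hrhoA]
                  positivity
                · rw [Set.Finite.mem_toFinset]
                  exact ha₁.1
              have hsx := hxC C hC
              rw [Finset.sum_sub_distrib, ← Finset.mul_sum]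
              nlinarith
          calc ∑ c ∈ C.toFinite.toFinset, z c
              = (1 - l)⁻¹ * ∑ c ∈ C.toFinite.toFinset, (x c - l * rho A c) := by
                rw [Finset.mul_sum]
            _ ≤ (1 - l)⁻¹ * (1 - l) :=
                mul_le_mul_of_nonneg_left key (le_of_lt (inv_pos.mpr h1l))
            _ = 1 := by field_simp
        have hsupp : {b | z b ≠ 0}.toFinite.toFinset ⊆ (S.toFinite.toFinset).erase a₀ := by
          intro b hb
          rw [Set.Finite.mem_toFinset] at hb
          rw [Finset.mem_erase, Set.Finite.mem_toFinset]
          constructor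
          · intro heq
            apply hb
            rw [heq]
            have h1 : rho A a₀ = 1 := by rw [hrhoA]; simp [ha₀]
            show (1 - l)⁻¹ * (x a₀ - l * rho A a₀) = 0
            rw [h1, ← hl]
            ring
          · by_contra hbS
            apply hb
            have hxb : x b = 0 := not_not.mp hbS
            have hbA : b ∉ A := fun h => hbS (hAS h)
            show (1 - l)⁻¹ * (x b - l * rho A b) = 0
            rw [hxb, hrhoA]
            simp [hbA]
        have ha₀Sf : a₀ ∈ S.toFinite.toFinset := by
          rw [Set.Finite.mem_toFinset]; exact ha₀S
        have hcard' : ({b | z b ≠ 0}.toFinite.toFinset).card ≤ n := by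
          have h1 := Finset.card_le_card hsupp
          rw [Finset.card_erase_of_mem ha₀Sf] at h1
          have h2 : (S.toFinite.toFinset).card ≤ n + 1 := hcard
          omega
        have hzmem := ih z hz0 hzC hcard'
        have hrho_mem : rho A ∈ stabPolytope (comparabilityGraph α) :=
          subset_convexHull _ _ ⟨A, hAstable, rfl⟩
        have hxeq : x = l • rho A + (1 - l) • z := by
          funext b
          show x b = l * rho A b + (1 - l) * ((1 - l)⁻¹ * (x b - l * rho A b))
          rw [← mul_assoc, mul_inv_cancel₀ (ne_of_gt h1l), one_mul]
          ring
        rw [hxeq]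
        exact (convex_convexHull ℝ _) hrho_mem hzmem (le_of_lt hl0) (le_of_lt h1l) (by ring)

private lemma easy_dir :
    stabPolytope (comparabilityGraph α) ⊆
      {x : α → ℝ | (∀ a, 0 ≤ x a) ∧
        ∀ C : Set α, IsMaxChain (· ≤ ·) C → ∑ a ∈ C.toFinite.toFinset, x a ≤ 1} := by
  classical
  apply convexHull_min
  · rintro x ⟨W, hW, rfl⟩
    constructor
    · intro a
      exact Set.indicator_nonneg (fun _ _ => zero_le_one) a
    · intro C hC
      have hval : ∀ c, rho W c = if c ∈ W then 1 else 0 := by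
        intro c
        simp [rho, Set.indicator_apply]
      calc ∑ a ∈ C.toFinite.toFinset, rho W a
          = ∑ a ∈ C.toFinite.toFinset.filter (· ∈ W), (1:ℝ) := by
            rw [Finset.sum_filter]
            exact Finset.sum_congr rfl (fun c _ => hval c)
        _ = ((C.toFinite.toFinset.filter (· ∈ W)).card : ℝ) := by simp
        _ ≤ 1 := by
            rw [Nat.cast_le_one]
            apply Finset.card_le_one.mpr
            intro a ha b hb
            simp only [Finset.mem_filter, Set.Finite.mem_toFinset] at ha hb
            by_contra hne
            rcases hC.1 ha.1 hb.1 hne with h | h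
            · exact hW a ha.2 b hb.2 (Or.inl (lt_of_le_of_ne h hne))
            · exact hW a ha.2 b hb.2 (Or.inr (lt_of_le_of_ne h (Ne.symm hne)))
  · intro p hp q hq a b ha hb hab
    constructor
    · intro c
      have h1 := hp.1 c
      have h2 := hq.1 c
      show 0 ≤ a * p c + b * q c
      have := mul_nonneg ha h1
      have := mul_nonneg hb h2
      linarith
    · intro C hC
      have h1 := hp.2 C hC
      have h2 := hq.2 C hC
      have heq : ∑ c ∈ C.toFinite.toFinset, (a • p + b • q) c
          = a * ∑ c ∈ C.toFinite.toFinset, p c + b * ∑ c ∈ C.toFinite.toFinset, q c := by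
        rw [Finset.mul_sum, Finset.mul_sum, ← Finset.sum_add_distrib]
        exact Finset.sum_congr rfl (fun c _ => rfl)
      rw [heq]
      nlinarith

end Aux

theorem stab_comparability_eq_chainPolytope (α : Type*) [Fintype α] [PartialOrder α] :
    stabPolytope (comparabilityGraph α) =
      {x : α → ℝ | (∀ a, 0 ≤ x a) ∧
        ∀ C : Set α, IsMaxChain (· ≤ ·) C → ∑ a ∈ C.toFinite.toFinset, x a ≤ 1} := by
  apply Set.Subset.antisymm
  · exact easy_dir
  · intro x hx
    exact hard_dir ({a | x a ≠ 0}.toFinite.toFinset).card x hx.1 hx.2 le_rfl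
end
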